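/- Let 0 < α < 1/M, β > 0 and d ∈ ℝ^N with d_m > 0 for all m, and let x̂^∞ be the fixed point of the map x ↦ F(x) − β d. Set d̲ = min_{m=1,…,N} d_m and γ₁ = exp(−β d̲)·(1 − αM)/(1 − αM + α)². If the initial value satisfies x̂_0 ≥ x̂^∞ componentwise, then the reference dynamical system satisfies ‖exp(x̂_i) − exp(x̂^∞)‖₁ ≤ γ₁ · ‖exp(x̂_{i−1}) − exp(x̂^∞)‖₁ for every i ≥ 1, where exp is applied componentwise. -/
import Mathlib


/-- The αβ-HMM log-belief-ratio mapping `F`, defined componentwise for `m = 1, …, M-1` by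
`F_m(x) = log(((1 - αM)·exp(x_m) + α + α·Σ_n exp(x_n)) / (1 - αM + α + α·Σ_n exp(x_n)))`. -/
noncomputable def abHMM.F (α : ℝ) (M : ℕ) (x : Fin (M - 1) → ℝ) : Fin (M - 1) → ℝ :=
  fun m => Real.log (((1 - α * M) * Real.exp (x m) + α + α * ∑ n, Real.exp (x n)) /
    (1 - α * M + α + α * ∑ n, Real.exp (x n)))

private lemma abHMM.gdiff (a α S T um vm : ℝ) (hDu : (0:ℝ) < a + α + α * S)
    (hDv : (0:ℝ) < a + α + α * T) :
    (a * um + α + α * S) / (a + α + α * S) - (a * vm + α + α * T) / (a + α + α * T)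
      = a * ((a + α + α * T) * (um - vm) + α * (1 - vm) * (S - T))
        / ((a + α + α * S) * (a + α + α * T)) := by
  field_simp
  ring

private lemma abHMM.fix_lt_one (a α T Em vm : ℝ) (ha : 0 < a) (hα : 0 < α) (hT : 0 < T)
    (hvm : 0 < vm) (hEm : Em < 1)
    (heq : vm = Em * ((a * vm + α + α * T) / (a + α + α * T))) : vm < 1 := by
  have hDv : 0 < a + α + α * T := by positivity
  have hg : 0 < (a * vm + α + α * T) / (a + α + α * T) := by positivity
  have h1 : vm < (a * vm + α + α * T) / (a + α + α * T) := by
    calc vm = Em * ((a * vm + α + α * T) / (a + α + α * T)) := heq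
      _ < 1 * ((a * vm + α + α * T) / (a + α + α * T)) :=
          mul_lt_mul_of_pos_right hEm hg
      _ = (a * vm + α + α * T) / (a + α + α * T) := one_mul _
  rw [lt_div_iff₀ hDv] at h1
  nlinarith [mul_pos hα hT]

private lemma abHMM.step_mono (N : ℕ) [Nonempty (Fin N)] (a α : ℝ)
    (ha : 0 < a) (hα : 0 < α)
    (Em : Fin N → ℝ) (hEm : ∀ m, 0 < Em m)
    (u v w : Fin N → ℝ) (hu : ∀ m, 0 < u m) (hv : ∀ m, 0 < v m)
    (hv1 : ∀ m, v m ≤ 1) (huv : ∀ m, v m ≤ u m)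
    (hw : ∀ m, w m = Em m * ((a * u m + α + α * ∑ n, u n) / (a + α + α * ∑ n, u n)))
    (hveq : ∀ m, v m = Em m * ((a * v m + α + α * ∑ n, v n) / (a + α + α * ∑ n, v n))) :
    ∀ m, v m ≤ w m := by
  intro m
  have hS : 0 < ∑ n, u n := Finset.sum_pos (fun n _ => hu n) Finset.univ_nonempty
  have hT : 0 < ∑ n, v n := Finset.sum_pos (fun n _ => hv n) Finset.univ_nonempty
  have hDu : 0 < a + α + α * ∑ n, u n := by positivity
  have hDv : 0 < a + α + α * ∑ n, v n := by positivity
  have hST : (∑ n, v n) ≤ ∑ n, u n := Finset.sum_le_sum (fun n _ => huv n)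
  have hid : w m - v m = Em m *
      (a * ((a + α + α * ∑ n, v n) * (u m - v m)
        + α * (1 - v m) * ((∑ n, u n) - ∑ n, v n))
        / ((a + α + α * ∑ n, u n) * (a + α + α * ∑ n, v n))) := by
    rw [hw m]
    conv_lhs => rw [hveq m]
    rw [← mul_sub, abHMM.gdiff a α _ _ _ _ hDu hDv]
  have hXnn : 0 ≤ a * ((a + α + α * ∑ n, v n) * (u m - v m)
        + α * (1 - v m) * ((∑ n, u n) - ∑ n, v n))
        / ((a + α + α * ∑ n, u n) * (a + α + α * ∑ n, v n)) := by
    apply div_nonneg _ (mul_pos hDu hDv).le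
    apply mul_nonneg ha.le
    have h1 : 0 ≤ u m - v m := sub_nonneg.2 (huv m)
    have h2 : 0 ≤ 1 - v m := sub_nonneg.2 (hv1 m)
    have h3 : 0 ≤ (∑ n, u n) - ∑ n, v n := sub_nonneg.2 hST
    exact add_nonneg (mul_nonneg hDv.le h1) (mul_nonneg (mul_nonneg hα.le h2) h3)
  nlinarith [mul_nonneg (hEm m).le hXnn]

private lemma abHMM.step_bound (N : ℕ) [Nonempty (Fin N)] (a α E : ℝ)
    (ha : 0 < a) (hα : 0 < α) (hNa : a + α * ((N : ℝ) + 1) = 1)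
    (Em : Fin N → ℝ) (hEm : ∀ m, 0 < Em m) (hEmE : ∀ m, Em m ≤ E)
    (u v w : Fin N → ℝ) (hu : ∀ m, 0 < u m) (hv : ∀ m, 0 < v m)
    (hv1 : ∀ m, v m ≤ 1) (huv : ∀ m, v m ≤ u m)
    (hw : ∀ m, w m = Em m * ((a * u m + α + α * ∑ n, u n) / (a + α + α * ∑ n, u n)))
    (hveq : ∀ m, v m = Em m * ((a * v m + α + α * ∑ n, v n) / (a + α + α * ∑ n, v n))) :
    ∑ m, |w m - v m| ≤ E * a / (a + α) ^ 2 * ∑ m, |u m - v m| := by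
  have hwv : ∀ m, v m ≤ w m :=
    abHMM.step_mono N a α ha hα Em hEm u v w hu hv hv1 huv hw hveq
  set S := ∑ n, u n with hS_def
  set T := ∑ n, v n with hT_def
  have hS : 0 < S := Finset.sum_pos (fun n _ => hu n) Finset.univ_nonempty
  have hT : 0 < T := Finset.sum_pos (fun n _ => hv n) Finset.univ_nonempty
  have hDu : 0 < a + α + α * S := by positivity
  have hDv : 0 < a + α + α * T := by positivity
  have hST : T ≤ S := Finset.sum_le_sum (fun n _ => huv n)
  have hE : 0 < E := lt_of_lt_of_le (hEm (Classical.arbitrary _)) (hEmE _)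
  have hterm : ∀ m, w m - v m = Em m *
      (a * ((a + α + α * T) * (u m - v m) + α * (1 - v m) * (S - T))
        / ((a + α + α * S) * (a + α + α * T))) := by
    intro m
    rw [hw m]
    conv_lhs => rw [hveq m]
    rw [← mul_sub, abHMM.gdiff a α _ _ _ _ hDu hDv]
  have hsum1 : ∑ m, (u m - v m) = S - T := by
    rw [Finset.sum_sub_distrib]
  have hsum2 : ∑ _m : Fin N, ((1:ℝ)) = (N : ℝ) := by
    simp
  have habs : ∀ m, |u m - v m| = u m - v m := fun m => abs_of_nonneg (sub_nonneg.2 (huv m))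
  have hbr : (a + α + α * T) + α * ((N : ℝ) - T) = 1 := by
    rw [← hNa]; ring
  calc ∑ m, |w m - v m| = ∑ m, (w m - v m) :=
        Finset.sum_congr rfl (fun m _ => abs_of_nonneg (sub_nonneg.2 (hwv m)))
    _ ≤ ∑ m, (E * a / ((a + α + α * S) * (a + α + α * T))) *
          ((a + α + α * T) * (u m - v m) + α * (1 - v m) * (S - T)) := by
        refine Finset.sum_le_sum (fun m _ => ?_)
        rw [hterm m]
        have hX : 0 ≤ (a + α + α * T) * (u m - v m) + α * (1 - v m) * (S - T) := by
          have h1 : 0 ≤ u m - v m := sub_nonneg.2 (huv m)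
          have h2 : 0 ≤ 1 - v m := sub_nonneg.2 (hv1 m)
          have h3 : 0 ≤ S - T := sub_nonneg.2 hST
          exact add_nonneg (mul_nonneg hDv.le h1) (mul_nonneg (mul_nonneg hα.le h2) h3)
        have h4 : 0 ≤ a * ((a + α + α * T) * (u m - v m) + α * (1 - v m) * (S - T))
            / ((a + α + α * S) * (a + α + α * T)) :=
          div_nonneg (mul_nonneg ha.le hX) (mul_pos hDu hDv).le
        calc Em m * (a * ((a + α + α * T) * (u m - v m) + α * (1 - v m) * (S - T))
              / ((a + α + α * S) * (a + α + α * T)))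
            ≤ E * (a * ((a + α + α * T) * (u m - v m) + α * (1 - v m) * (S - T))
              / ((a + α + α * S) * (a + α + α * T))) :=
              mul_le_mul_of_nonneg_right (hEmE m) h4
          _ = (E * a / ((a + α + α * S) * (a + α + α * T))) *
              ((a + α + α * T) * (u m - v m) + α * (1 - v m) * (S - T)) := by ring
    _ = (E * a / ((a + α + α * S) * (a + α + α * T))) *
          ((a + α + α * T) * (S - T) + α * ((N : ℝ) - T) * (S - T)) := by
        rw [← Finset.mul_sum]
        congr 1
        calc ∑ m, ((a + α + α * T) * (u m - v m) + α * (1 - v m) * (S - T))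
            = ∑ m, ((a + α + α * T) * (u m - v m) + (α * (S - T)) * (1 - v m)) :=
              Finset.sum_congr rfl (fun m _ => by ring)
          _ = (a + α + α * T) * (∑ m, (u m - v m)) + (α * (S - T)) * (∑ m, (1 - v m)) := by
              rw [Finset.sum_add_distrib, ← Finset.mul_sum, ← Finset.mul_sum]
          _ = (a + α + α * T) * (S - T) + α * ((N : ℝ) - T) * (S - T) := by
              rw [hsum1, Finset.sum_sub_distrib, hsum2]
              ring
    _ = (E * a / ((a + α + α * S) * (a + α + α * T))) * (S - T) := by
        congr 1
        calc (a + α + α * T) * (S - T) + α * ((N : ℝ) - T) * (S - T)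
            = ((a + α + α * T) + α * ((N : ℝ) - T)) * (S - T) := by ring
          _ = 1 * (S - T) := by rw [hbr]
          _ = S - T := one_mul _
    _ ≤ (E * a / (a + α) ^ 2) * (S - T) := by
        apply mul_le_mul_of_nonneg_right _ (sub_nonneg.2 hST)
        apply div_le_div_of_nonneg_left (mul_nonneg hE.le ha.le) (by positivity)
        nlinarith [mul_nonneg (mul_nonneg hα.le hS.le) (add_pos ha hα).le,
          mul_nonneg (mul_nonneg hα.le hT.le) (add_pos ha hα).le,
          mul_nonneg (mul_nonneg hα.le hS.le) (mul_nonneg hα.le hT.le)]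
    _ = E * a / (a + α) ^ 2 * ∑ m, |u m - v m| := by
        rw [show (∑ m, |u m - v m|) = ∑ m, (u m - v m) from
          Finset.sum_congr rfl (fun m _ => habs m), hsum1]

/-- Corollary 1, second part: with `d̲ = min_m d_m` and
`γ₁ = exp(-β d̲)(1-αM)/(1-αM+α)²`, if the initial value satisfies `x̂_0 ≥ x̂^∞`
componentwise, then the reference dynamical system satisfies
`‖exp(x̂_i) - exp(x̂^∞)‖₁ ≤ γ₁ ‖exp(x̂_{i-1}) - exp(x̂^∞)‖₁` for every `i ≥ 1`,
where `exp` acts componentwise and `‖v‖₁ = Σ_m |v_m|`. -/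
theorem abHMM_reference_system_L1_contraction_refined (M : ℕ) (hM : 2 ≤ M) (α β : ℝ)
    (hα : 0 < α) (hα' : α < 1 / M) (hβ : 0 < β)
    (d : Fin (M - 1) → ℝ) (hd : ∀ m, 0 < d m)
    (xinf : Fin (M - 1) → ℝ) (hfix : xinf = fun m => abHMM.F α M xinf m - β * d m)
    (xh : ℕ → Fin (M - 1) → ℝ)
    (hrec : ∀ i : ℕ, xh (i + 1) = fun m => abHMM.F α M (xh i) m - β * d m)
    (hinit : ∀ m, xinf m ≤ xh 0 m)
    (dlow : ℝ) (hdlow : dlow = sInf (Set.range d))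
    (γ₁ : ℝ)
    (hγ₁ : γ₁ = Real.exp (-(β * dlow)) * (1 - α * M) / (1 - α * M + α) ^ 2) :
    ∀ i : ℕ, ∑ m, |Real.exp (xh (i + 1) m) - Real.exp (xinf m)| ≤
      γ₁ * ∑ m, |Real.exp (xh i m) - Real.exp (xinf m)| := by
  have hN : 0 < M - 1 := by omega
  haveI : Nonempty (Fin (M - 1)) := ⟨⟨0, hN⟩⟩
  have hMpos : (0:ℝ) < (M:ℝ) := by
    have : 0 < M := by omega
    exact_mod_cast this
  have ha : 0 < 1 - α * M := by
    have h1 : α * M < (1 / M : ℝ) * M := mul_lt_mul_of_pos_right hα' hMpos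
    rw [one_div, inv_mul_cancel₀ (ne_of_gt hMpos)] at h1
    linarith
  have hNa : (1 - α * M) + α * (((M - 1 : ℕ) : ℝ) + 1) = 1 := by
    rw [Nat.cast_sub (by omega : 1 ≤ M)]
    push_cast
    ring
  have hexpF : ∀ x : Fin (M - 1) → ℝ, ∀ m,
      Real.exp (abHMM.F α M x m) =
        ((1 - α * M) * Real.exp (x m) + α + α * ∑ n, Real.exp (x n)) /
        (1 - α * M + α + α * ∑ n, Real.exp (x n)) := by
    intro x m
    have hS : 0 < ∑ n, Real.exp (x n) :=
      Finset.sum_pos (fun n _ => Real.exp_pos _) Finset.univ_nonempty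
    have hnum : 0 < (1 - α * M) * Real.exp (x m) + α + α * ∑ n, Real.exp (x n) := by
      nlinarith [Real.exp_pos (x m), mul_pos ha (Real.exp_pos (x m)), mul_pos hα hS]
    have hden : 0 < 1 - α * M + α + α * ∑ n, Real.exp (x n) := by
      nlinarith [mul_pos hα hS]
    unfold abHMM.F
    exact Real.exp_log (div_pos hnum hden)
  have hEm : ∀ m : Fin (M - 1), 0 < Real.exp (-(β * d m)) := fun m => Real.exp_pos _
  have hEm1 : ∀ m : Fin (M - 1), Real.exp (-(β * d m)) < 1 := by
    intro m
    have h1 : -(β * d m) < 0 := neg_lt_zero.2 (mul_pos hβ (hd m))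
    calc Real.exp (-(β * d m)) < Real.exp 0 := Real.exp_lt_exp.2 h1
      _ = 1 := Real.exp_zero
  have hEmE : ∀ m : Fin (M - 1), Real.exp (-(β * d m)) ≤ Real.exp (-(β * dlow)) := by
    intro m
    apply Real.exp_le_exp.2
    have hle : dlow ≤ d m := by
      rw [hdlow]
      exact csInf_le (Set.Finite.bddBelow (Set.finite_range d)) ⟨m, rfl⟩
    nlinarith
  have hveq : ∀ m, Real.exp (xinf m) = Real.exp (-(β * d m)) *
      (((1 - α * M) * Real.exp (xinf m) + α + α * ∑ n, Real.exp (xinf n)) /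
        (1 - α * M + α + α * ∑ n, Real.exp (xinf n))) := by
    intro m
    have h1 : xinf m = abHMM.F α M xinf m - β * d m := congrFun hfix m
    conv_lhs => rw [h1]
    rw [Real.exp_sub, hexpF, Real.exp_neg]
    ring
  have hiter : ∀ i m, Real.exp (xh (i + 1) m) = Real.exp (-(β * d m)) *
      (((1 - α * M) * Real.exp (xh i m) + α + α * ∑ n, Real.exp (xh i n)) /
        (1 - α * M + α + α * ∑ n, Real.exp (xh i n))) := by
    intro i m
    have h1 : xh (i + 1) m = abHMM.F α M (xh i) m - β * d m := congrFun (hrec i) m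
    rw [h1, Real.exp_sub, hexpF, Real.exp_neg]
    ring
  have hT : 0 < ∑ n, Real.exp (xinf n) :=
    Finset.sum_pos (fun n _ => Real.exp_pos _) Finset.univ_nonempty
  have hv1 : ∀ m, Real.exp (xinf m) ≤ 1 := by
    intro m
    exact le_of_lt (abHMM.fix_lt_one (1 - α * M) α _ _ _ ha hα hT (Real.exp_pos _)
      (hEm1 m) (hveq m))
  have hmono : ∀ i m, Real.exp (xinf m) ≤ Real.exp (xh i m) := by
    intro i
    induction i with
    | zero => exact fun m => Real.exp_le_exp.2 (hinit m)
    | succ i ih =>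
      exact abHMM.step_mono (M - 1) (1 - α * M) α ha hα
        (fun m => Real.exp (-(β * d m))) hEm
        (fun m => Real.exp (xh i m)) (fun m => Real.exp (xinf m))
        (fun m => Real.exp (xh (i + 1) m))
        (fun m => Real.exp_pos _) (fun m => Real.exp_pos _)
        hv1 ih (hiter i) hveq
  intro i
  rw [hγ₁]
  exact abHMM.step_bound (M - 1) (1 - α * M) α (Real.exp (-(β * dlow))) ha hα hNa
    (fun m => Real.exp (-(β * d m))) hEm hEmE
    (fun m => Real.exp (xh i m)) (fun m => Real.exp (xinf m))
    (fun m => Real.exp (xh (i + 1) m))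
    (fun m => Real.exp_pos _) (fun m => Real.exp_pos _)
    hv1 (hmono i) (hiter i) hveq
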